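/- Let G, H, μ, μ_v, Λ_v, β_v > 0 and define the quadratic Q(x) = 2μ_v(G+H+μ_v)x² + [μ_vμ(3μ_v+2G) − Λ_vβ_v(G+H)]x + (μ_vμ)²(1 − R₀). If H ≤ G, Λ_vβ_v < 2μ_vμ, and R₀ ≤ 1, then Q has no positive root; if R₀ > 1, then Q has exactly one positive root. -/

import Mathlib

/-- A quadratic with positive leading coefficient and negative constant term
has exactly one positive root. -/
lemma quad_unique_pos_root (a b c : ℝ) (ha : 0 < a) (hc : c < 0) :
    ∃! x : ℝ, 0 < x ∧ a * x^2 + b * x + c = 0 := by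
  have hD : b ^ 2 < b ^ 2 - 4 * a * c := by nlinarith
  have hDpos : 0 < b ^ 2 - 4 * a * c := by nlinarith [sq_nonneg b]
  set s := Real.sqrt (b ^ 2 - 4 * a * c) with hs
  have hs2 : s ^ 2 = b ^ 2 - 4 * a * c := Real.sq_sqrt hDpos.le
  have hsnn : 0 ≤ s := Real.sqrt_nonneg _
  have hsb : -b < s := by nlinarith
  have hsb' : b < s := by nlinarith
  set x₀ := (s - b) / (2 * a) with hx₀
  have hx₀pos : 0 < x₀ := div_pos (by linarith) (by linarith)
  have ha' : (2 * a) ≠ 0 := by positivity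
  have hroot : a * x₀^2 + b * x₀ + c = 0 := by
    rw [hx₀]
    field_simp
    nlinarith [hs2]
  refine ⟨x₀, ⟨hx₀pos, hroot⟩, ?_⟩
  rintro y ⟨hy, hQy⟩
  have key : (y - x₀) * (a * (y + x₀) + b) = 0 := by linear_combination hQy - hroot
  rcases mul_eq_zero.mp key with h | h
  · linarith [sub_eq_zero.mp h]
  · exfalso
    have hb : b = -(a * (y + x₀)) := by linarith
    nlinarith [mul_pos (mul_pos ha hy) hx₀pos]

/-- Positive roots of the quadratic determining the symmetric coexistence equilibrium:
none when `R₀ ≤ 1`, exactly one when `R₀ > 1` (with `R₀ = N_vβ_vG/(μμ_v)`,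
`N_v = Λ_v/μ_v`), under `H ≤ G` and `Λ_v β_v < 2μ_vμ`. -/
theorem coexistence_quadratic_roots
    (G H μ μv Λv βv : ℝ)
    (hG : 0 < G) (hH : 0 < H) (hμ : 0 < μ) (hμv : 0 < μv)
    (hΛv : 0 < Λv) (hβv : 0 < βv)
    (hHG : H ≤ G) (hsmall : Λv * βv < 2 * μv * μ) :
    (((Λv / μv) * βv * G / (μ * μv) ≤ 1) →
      ¬ ∃ x : ℝ, 0 < x ∧
        2 * μv * (G + H + μv) * x^2
          + (μv * μ * (3 * μv + 2 * G) - Λv * βv * (G + H)) * x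
          + (μv * μ)^2 * (1 - (Λv / μv) * βv * G / (μ * μv)) = 0) ∧
    ((1 < (Λv / μv) * βv * G / (μ * μv)) →
      ∃! x : ℝ, 0 < x ∧
        2 * μv * (G + H + μv) * x^2
          + (μv * μ * (3 * μv + 2 * G) - Λv * βv * (G + H)) * x
          + (μv * μ)^2 * (1 - (Λv / μv) * βv * G / (μ * μv)) = 0) := by
  have hμμv : 0 < μ * μv := by positivity
  have hRval : (Λv / μv) * βv * G / (μ * μv) = Λv * βv * G / (μ * μv ^ 2) := by
    field_simp
  constructor
  · intro hR1
    rintro ⟨x, hx, hQ⟩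
    rw [hRval, div_le_one (by positivity)] at hR1
    -- hR1 : Λv * βv * G ≤ μ * μv ^ 2
    have hb : 0 < μv * μ * (3 * μv + 2 * G) - Λv * βv * (G + H) := by
      nlinarith [mul_pos hΛv hβv]
    have hc : 0 ≤ (μv * μ)^2 * (1 - (Λv / μv) * βv * G / (μ * μv)) := by
      have : (Λv / μv) * βv * G / (μ * μv) ≤ 1 := by
        rw [hRval, div_le_one (by positivity)]; exact hR1
      nlinarith [sq_nonneg (μv * μ)]
    nlinarith [mul_pos hx hx, mul_pos hb hx, mul_pos hμv (by nlinarith : (0:ℝ) < G + H + μv)]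
  · intro hR1
    have hc : (μv * μ)^2 * (1 - (Λv / μv) * βv * G / (μ * μv)) < 0 := by
      have h2 : 0 < (μv * μ)^2 := by positivity
      nlinarith
    exact quad_unique_pos_root _ _ _ (by positivity) hc
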